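/- Suppose R: ℕ → A satisfies R(0) = 1 and the recurrence n·R(n) = Σ_{k=1}^{n} I(k)·R(n−k) for all n ≥ 1. Then for every n ≥ 1, R(n) = Σ_{m=1}^{n} Σ_{(j₁,…,j_m)} C₋(j₁,…,j_m) · I(j₁)·I(j₂)⋯I(j_m), where the inner sum runs over all m-tuples of positive integers with j₁ + ⋯ + j_m = n and C₋(j₁,…,j_m) = 1/(j_m·(j_m+j_{m−1})·(j_m+j_{m−1}+j_{m−2})⋯(j_m+⋯+j₁)). -/

import Mathlib

open Finset

noncomputable def stmt7_coef {n : ℕ} (c : Composition n) : ℚ :=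
  ∏ i ∈ Finset.range c.length, (((c.blocks.reverse.take (i + 1)).sum : ℚ))⁻¹

def stmt7_cons {n : ℕ} (k : ℕ) (hk : 0 < k) (hkn : k ≤ n) (d : Composition (n - k)) :
    Composition n where
  blocks := k :: d.blocks
  blocks_pos := by
    intro i hi
    rcases List.mem_cons.1 hi with h | h
    · exact h ▸ hk
    · exact d.blocks_pos h
  blocks_sum := by
    simp [d.blocks_sum, Nat.add_sub_cancel' hkn]

def stmt7_split {n : ℕ} (c : Composition n) : Σ k : ℕ, Composition (n - k) :=
  ⟨c.blocks.headI, ⟨c.blocks.tail,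
    fun hi => c.blocks_pos (List.mem_of_mem_tail hi), by
      have hs := c.blocks_sum
      cases hb : c.blocks with
      | nil => rw [hb] at hs; simp at hs; simp [hb, hs]
      | cons a l => rw [hb] at hs; simp at hs; simp [hb]; omega⟩⟩

lemma stmt7_coef_cons {n : ℕ} (k : ℕ) (hk : 0 < k) (hkn : k ≤ n) (d : Composition (n - k)) :
    stmt7_coef (stmt7_cons k hk hkn d) = ((n : ℚ))⁻¹ * stmt7_coef d := by
  have hbl : (stmt7_cons k hk hkn d).blocks = k :: d.blocks := rfl
  have hlen : (stmt7_cons k hk hkn d).length = d.length + 1 := by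
    simp [Composition.length, hbl]
  unfold stmt7_coef
  rw [hlen, Finset.prod_range_succ, hbl, List.reverse_cons, mul_comm]
  congr 1
  · have h1 : (d.blocks.reverse ++ [k]).take (d.length + 1) = d.blocks.reverse ++ [k] := by
      apply List.take_of_length_le
      simp [Composition.length]
    rw [h1]
    have h2 : (d.blocks.reverse ++ [k]).sum = n := by
      simp [List.sum_reverse, d.blocks_sum, Nat.sub_add_cancel hkn]
    rw [h2]
  · apply Finset.prod_congr rfl
    intro i hi
    rw [List.take_append_of_le_length]
    rw [List.length_reverse]
    exact Nat.succ_le_of_lt (Finset.mem_range.1 hi)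

lemma stmt7_blocks_ne {n : ℕ} (hn : 1 ≤ n) (c : Composition n) : c.blocks ≠ [] := by
  intro h
  have hs := c.blocks_sum
  rw [h] at hs
  simp at hs
  omega

lemma stmt7_headI_tail {n : ℕ} (hn : 1 ≤ n) (c : Composition n) :
    c.blocks.headI :: c.blocks.tail = c.blocks := by
  cases hb : c.blocks with
  | nil => exact absurd hb (stmt7_blocks_ne hn c)
  | cons a l => rfl

lemma stmt7_headI_pos {n : ℕ} (hn : 1 ≤ n) (c : Composition n) : 0 < c.blocks.headI := by
  cases hb : c.blocks with
  | nil => exact absurd hb (stmt7_blocks_ne hn c)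
  | cons a l =>
    have ha : a ∈ c.blocks := hb ▸ List.mem_cons_self
    simpa using c.blocks_pos ha

lemma stmt7_headI_add {n : ℕ} (hn : 1 ≤ n) (c : Composition n) :
    c.blocks.headI + c.blocks.tail.sum = n := by
  have hs := c.blocks_sum
  rw [← stmt7_headI_tail hn c] at hs
  simpa using hs

noncomputable def stmt7_S (A : Type*) [Ring A] [Algebra ℚ A] (I : ℕ → A) (n : ℕ) : A :=
  ∑ c : Composition n, stmt7_coef c • (c.blocks.map I).prod

instance : Unique (Composition 0) where
  default := ⟨[], by simp, by simp⟩
  uniq := by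
    intro c
    have h : c.blocks = [] := by
      cases hb : c.blocks with
      | nil => rfl
      | cons a l =>
        have hpos : 0 < a := c.blocks_pos (hb ▸ List.mem_cons_self)
        have hsum := c.blocks_sum
        rw [hb] at hsum
        simp at hsum
        omega
    exact Composition.ext h

lemma stmt7_S_zero (A : Type*) [Ring A] [Algebra ℚ A] (I : ℕ → A) : stmt7_S A I 0 = 1 := by
  rw [stmt7_S, Fintype.sum_unique]
  have h : ∀ c : Composition 0, c.blocks = [] := fun c => by
    rw [Subsingleton.elim c ⟨[], by simp, by simp⟩]
  simp [stmt7_coef, h, Composition.length]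

lemma stmt7_S_rec (A : Type*) [Ring A] [Algebra ℚ A] (I : ℕ → A) (n : ℕ) (hn : 1 ≤ n) :
    (n : ℚ) • stmt7_S A I n = ∑ k ∈ Finset.Icc 1 n, I k * stmt7_S A I (n - k) := by
  have hn0 : (n : ℚ) ≠ 0 := by exact_mod_cast Nat.one_le_iff_ne_zero.1 hn
  rw [stmt7_S, Finset.smul_sum]
  have hrw : ∀ k ∈ Finset.Icc 1 n, I k * stmt7_S A I (n - k) =
      ∑ d : Composition (n - k), I k * (stmt7_coef d • (d.blocks.map I).prod) := by
    intro k _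
    rw [stmt7_S, Finset.mul_sum]
  rw [Finset.sum_congr rfl hrw, Finset.sum_sigma']
  refine Finset.sum_bij' (fun (c : Composition n) _ => stmt7_split c)
    (fun p hp => stmt7_cons p.1
      (by simp only [Finset.mem_sigma, Finset.mem_Icc] at hp; omega)
      (by simp only [Finset.mem_sigma, Finset.mem_Icc] at hp; omega) p.2)
    ?_ ?_ ?_ ?_ ?_
  · intro c _
    simp only [Finset.mem_sigma, Finset.mem_Icc, Finset.mem_univ, and_true]
    have h1 := stmt7_headI_pos hn c
    have h2 := stmt7_headI_add hn c
    have h3 : (stmt7_split c).fst = c.blocks.headI := rfl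
    rw [h3]
    exact ⟨by omega, by omega⟩
  · intro p _; exact Finset.mem_univ _
  · intro c _
    apply Composition.ext
    exact stmt7_headI_tail hn c
  · intro p hp
    rcases p with ⟨k, d⟩
    rfl
  · intro c _
    set k := c.blocks.headI with hk
    have hk1 : 0 < k := stmt7_headI_pos hn c
    have h2 := stmt7_headI_add hn c
    have hkn : k ≤ n := by omega
    have hc : c = stmt7_cons k hk1 hkn (stmt7_split c).2 := by
      apply Composition.ext
      exact (stmt7_headI_tail hn c).symm
    conv_lhs => rw [hc]
    rw [stmt7_coef_cons k hk1 hkn (stmt7_split c).2]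
    have hbl : (stmt7_cons k hk1 hkn (stmt7_split c).2).blocks =
        k :: (stmt7_split c).2.blocks := rfl
    rw [hbl]
    simp only [List.map_cons, List.prod_cons]
    rw [smul_smul, ← mul_assoc, mul_inv_cancel₀ hn0, one_mul, mul_smul_comm]
    rfl

/-- Let `A` be an associative unital `ℚ`-algebra and `I(1), I(2), …` an
arbitrary sequence in `A`.  If `R : ℕ → A` satisfies `R(0) = 1` and
`n·R(n) = Σ_{k=1}^{n} I(k)·R(n−k)` for all `n ≥ 1`, then for every `n ≥ 1`,
`R(n) = Σ_{m=1}^{n} Σ_{j₁+⋯+j_m=n, jᵢ≥1} C₋(j₁,…,j_m)·I(j₁)⋯I(j_m)`, where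
`C₋(j₁,…,j_m) = 1/(j_m(j_m+j_{m−1})⋯(j_m+⋯+j₁))`. -/
theorem stmt7 (A : Type*) [Ring A] [Algebra ℚ A] (I : ℕ → A) (R : ℕ → A)
    (hR0 : R 0 = 1)
    (hrec : ∀ n : ℕ, 1 ≤ n → (n : ℚ) • R n = ∑ k ∈ Finset.Icc 1 n, I k * R (n - k))
    (n : ℕ) (hn : 1 ≤ n) :
    R n = ∑ m ∈ Finset.Icc 1 n,
      ∑ c ∈ Finset.univ.filter (fun c : Composition n => c.length = m),
        (∏ i ∈ Finset.range c.length, (((c.blocks.reverse.take (i + 1)).sum : ℚ))⁻¹) •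
          (c.blocks.map I).prod := by
  have key : ∀ m : ℕ, R m = stmt7_S A I m := by
    intro m
    induction m using Nat.strong_induction_on with
    | _ m ih =>
      rcases Nat.eq_zero_or_pos m with hm | hm
      · rw [hm, hR0, stmt7_S_zero]
      · have h1 := hrec m hm
        have h2 := stmt7_S_rec A I m hm
        have heq : ∀ k ∈ Finset.Icc 1 m, I k * R (m - k) = I k * stmt7_S A I (m - k) := by
          intro k hk
          simp only [Finset.mem_Icc] at hk
          rw [ih (m - k) (by omega)]
        rw [Finset.sum_congr rfl heq, ← h2] at h1
        have hm0 : (m : ℚ) ≠ 0 := by exact_mod_cast Nat.pos_iff_ne_zero.1 hm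
        exact smul_right_injective A hm0 h1
  rw [key n]
  rw [stmt7_S]
  rw [← Finset.sum_fiberwise_of_maps_to (g := fun c : Composition n => c.length)
    (t := Finset.Icc 1 n) (fun c _ => Finset.mem_Icc.2 ⟨c.length_pos_of_pos hn, c.length_le⟩)]
  rfl
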